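/- For a FIFO cache of associativity A starting from a state filled with a set B of fp blocks, the number of reachable cache states under traces over B is 1 if fp ≤ A, is A+1 if fp = A+1, and is fp!/(fp−A)! if fp > A+1. -/

import Mathlib

/-- LRU update: accessed block gets age 0; blocks younger than it (or all cached
blocks on a miss) age by one; other blocks are unchanged. -/
def updLRU (A : ℕ) (b : ℕ) (c : ℕ → ℕ) : ℕ → ℕ := fun b' =>
  if b' = b then 0 else if c b' < min (c b) A then c b' + 1 else c b'

/-- FIFO update: hits leave the state unchanged; on a miss the accessed block gets
age 0 and cached blocks age by one (the oldest is evicted). -/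
def updFIFO (A : ℕ) (b : ℕ) (c : ℕ → ℕ) : ℕ → ℕ :=
  if c b < A then c
  else fun b' => if b' = b then 0 else if c b' < A then c b' + 1 else c b'

/-- Generic permutation-policy update with permutation function `P`:
on a hit, ages of cached blocks are permuted by `P (c b)`; on a miss the accessed
block gets age 0 and cached blocks age by one. -/
def updPerm (P : ℕ → ℕ → ℕ) (A : ℕ) (b : ℕ) (c : ℕ → ℕ) : ℕ → ℕ :=
  if c b < A then fun b' => if c b' < A then P (c b) (c b') else c b'
  else fun b' => if b' = b then 0 else if c b' < A then c b' + 1 else c b'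

/-- The PLRU permutation function. -/
def piPLRU (a a' : ℕ) : ℕ :=
  if _h1 : a' = a then 0
  else if _h2 : a % 2 = 0 ∧ a' % 2 = 1 then a'
  else if _h3 : a % 2 = 1 ∧ a' % 2 = 0 then a' + 1
  else 2 * piPLRU (a / 2) (a' / 2)
termination_by a + a'
decreasing_by omega

/-- The PLRU update. -/
def updPLRU (A : ℕ) : ℕ → (ℕ → ℕ) → (ℕ → ℕ) := updPerm piPLRU A

/-- Sequential application of the update function along a trace of accesses. -/
def updTrace (upd : ℕ → (ℕ → ℕ) → (ℕ → ℕ)) : List ℕ → (ℕ → ℕ) → (ℕ → ℕ)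
  | [], c => c
  | b :: t, c => updTrace upd t (upd b c)

/-- States reachable from `c₀` using traces over the set of blocks `B`. -/
def Reach (upd : ℕ → (ℕ → ℕ) → (ℕ → ℕ)) (B : Set ℕ) (c₀ : ℕ → ℕ) : Set (ℕ → ℕ) :=
  {c | ∃ t : List ℕ, (∀ b ∈ t, b ∈ B) ∧ updTrace upd t c₀ = c}

/-- Cache state invariant: ages are at most `A`, and distinct blocks have distinct
ages unless both have age `A` (uncached). -/
def CacheInv (A : ℕ) (c : ℕ → ℕ) : Prop :=
  (∀ b, c b ≤ A) ∧ ∀ b b', c b < A → c b = c b' → b = b'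

/-- `c` is filled with `B`: the blocks of `B` occupy the youngest ages
`{0, …, min (A, |B|−1)}`, and all remaining cache lines are occupied
(by attacker blocks). -/
def FilledWith (A : ℕ) (c : ℕ → ℕ) (B : Finset ℕ) : Prop :=
  CacheInv A c ∧ (∀ a, a < A → ∃ b, c b = a) ∧
    c '' ↑B = Set.Iio (min (A + 1) B.card)

/-- `c` is empty w.r.t. `B`: no block of `B` is cached, and all cache lines are
occupied (by attacker blocks). -/
def EmptyWith (A : ℕ) (c : ℕ → ℕ) (B : Finset ℕ) : Prop :=
  CacheInv A c ∧ (∀ b ∈ B, c b = A) ∧ (∀ a, a < A → ∃ b, c b = a)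

namespace FifoAux

open List Relation

/-! ### List-level machinery -/

def stIdx (l : List ℕ) : ℕ → ℕ := fun b => l.idxOf b

def PstepB (B : Finset ℕ) (l m : List ℕ) : Prop :=
  ∃ x, x ∈ B ∧ x ∉ l ∧ m = x :: l.dropLast

def RstepB (B : Finset ℕ) (l m : List ℕ) : Prop :=
  ∃ x, x ∈ B ∧ x ∉ l ∧ m = l.tail ++ [x]

def FRb (B : Finset ℕ) := Relation.ReflTransGen (PstepB B)
def RRb (B : Finset ℕ) := Relation.ReflTransGen (RstepB B)

def ValidL (A : ℕ) (B : Finset ℕ) (l : List ℕ) : Prop :=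
  l.length = A ∧ l.Nodup ∧ ∀ y ∈ l, y ∈ B

lemma getElem_not_mem_take {l : List ℕ} (h : l.Nodup) {j : ℕ} (hj : j < l.length) :
    l[j] ∉ l.take j := by
  intro hmem
  obtain ⟨i, hi, hieq⟩ := mem_iff_getElem.1 hmem
  have hi' : i < j := by
    have := hi; rw [length_take, Nat.lt_min] at this; exact this.1
  rw [getElem_take] at hieq
  exact absurd (h.getElem_inj_iff.1 hieq) (by omega)

lemma getElem_not_mem_drop {l : List ℕ} (h : l.Nodup) {j : ℕ} (hj : j < l.length) :
    l[j] ∉ l.drop (j+1) := by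
  intro hmem
  obtain ⟨i, hi, hieq⟩ := mem_iff_getElem.1 hmem
  rw [getElem_drop] at hieq
  have := h.getElem_inj_iff.1 hieq
  omega

lemma ValidL.pstep {A : ℕ} {B : Finset ℕ} {l m : List ℕ} (hv : ValidL A B l)
    (hA : 1 ≤ A) (h : PstepB B l m) : ValidL A B m := by
  obtain ⟨hlen, hnd, hB⟩ := hv
  obtain ⟨x, hxB, hxl, rfl⟩ := h
  refine ⟨by simp [length_dropLast]; omega, ?_, ?_⟩
  · exact (nodup_cons).2 ⟨fun hc => hxl (dropLast_subset _ hc), hnd.sublist (dropLast_sublist _)⟩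
  · intro y hy
    rcases mem_cons.1 hy with rfl | hy
    · exact hxB
    · exact hB y (dropLast_subset _ hy)

lemma ValidL.rstep {A : ℕ} {B : Finset ℕ} {l m : List ℕ} (hv : ValidL A B l)
    (hA : 1 ≤ A) (h : RstepB B l m) : ValidL A B m := by
  obtain ⟨hlen, hnd, hB⟩ := hv
  obtain ⟨x, hxB, hxl, rfl⟩ := h
  refine ⟨by simp [length_tail]; omega, ?_, ?_⟩
  · refine (nodup_append).2 ⟨hnd.sublist (tail_sublist _), nodup_singleton _, ?_⟩
    intro y hy _z hy' hyz
    rw [← hyz] at hy'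
    rcases mem_singleton.1 hy' with rfl
    exact hxl (tail_subset _ hy)
  · intro y hy
    rcases mem_append.1 hy with hy | hy
    · exact hB y (tail_subset _ hy)
    · rcases mem_singleton.1 hy with rfl; exact hxB

lemma appendWord {B : Finset ℕ} : ∀ (w l : List ℕ), l ≠ [] → w.Nodup →
    (∀ y ∈ w, y ∈ B) → (∀ i (h : i < w.length), w[i] ∉ l.drop i) →
    RRb B l ((l ++ w).drop w.length)
  | [], l, _, _, _, _ => by simp; exact Relation.ReflTransGen.refl
  | a :: w', l, hl, hnd, hB, hcond => by
    have ha : a ∉ l := by exact hcond 0 (by simp)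
    have hstep : RstepB B l (l.tail ++ [a]) :=
      ⟨a, hB a (mem_cons_self), ha, rfl⟩
    have hrec : RRb B (l.tail ++ [a]) (((l.tail ++ [a]) ++ w').drop w'.length) := by
      refine appendWord w' (l.tail ++ [a]) (by simp) (nodup_cons.1 hnd).2
        (fun y hy => hB y (mem_cons_of_mem _ hy)) ?_
      intro i hi hmem
      rw [drop_append] at hmem
      rcases mem_append.1 hmem with hmem | hmem
      · rw [← drop_one, drop_drop] at hmem
        exact hcond (i+1) (by simpa using hi) (by simpa [Nat.add_comm] using hmem)
      · have : w'[i] = a := by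
          have := mem_of_mem_drop hmem
          simpa using this
        exact (nodup_cons.1 hnd).1 (this ▸ getElem_mem hi)
    obtain ⟨h, t, rfl⟩ := exists_cons_of_ne_nil hl
    have heq : ((h :: t).tail ++ [a]) ++ w' = t ++ (a :: w') := by simp
    refine Relation.ReflTransGen.head hstep ?_
    rw [heq] at hrec
    show RRb B _ _
    simpa using hrec

lemma pushWord {A : ℕ} {B : Finset ℕ} : ∀ (w l : List ℕ), l.length = A → l.Nodup → w.Nodup →
    (∀ y ∈ w, y ∈ B) → w.length ≤ A → (∀ i (h : i < w.length), w[i] ∉ l.take (A - i)) →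
    FRb B l (w.reverse ++ l.take (A - w.length))
  | [], l, hl, _, _, _, _, _ => by
    simp [← hl]; exact Relation.ReflTransGen.refl
  | a :: w', l, hl, hlnd, hnd, hB, hlen, hcond => by
    have hA1 : 1 ≤ A := le_trans (by simp) hlen
    have ha : a ∉ l := by
      have := hcond 0 (by simp)
      simpa [Nat.sub_zero, ← hl, take_length] using this
    have hstep : PstepB B l (a :: l.dropLast) := ⟨a, hB a (mem_cons_self), ha, rfl⟩
    have hlen1 : (a :: l.dropLast).length = A := by simp [length_dropLast]; omega
    have hdl : l.dropLast = l.take (A - 1) := by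
      rw [dropLast_eq_take, hl]
    have hrec : FRb B (a :: l.dropLast)
        (w'.reverse ++ (a :: l.dropLast).take (A - w'.length)) := by
      refine pushWord w' (a :: l.dropLast) hlen1
        (nodup_cons.2 ⟨fun hc => ha (dropLast_subset _ hc), hlnd.sublist (dropLast_sublist _)⟩)
        (nodup_cons.1 hnd).2 (fun y hy => hB y (mem_cons_of_mem _ hy))
        (by simp at hlen ⊢; omega) ?_
      intro i hi hmem
      have hiA : i + 1 < A + 1 := by simp at hlen; omega
      have hAi : A - i = (A - i - 1) + 1 := by omega
      rw [hAi, take_succ_cons] at hmem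
      rcases mem_cons.1 hmem with heq | hmem
      · exact (nodup_cons.1 hnd).1 (heq ▸ getElem_mem hi)
      · rw [hdl, take_take] at hmem
        have hmin : min (A - i - 1) (A - 1) = A - (i+1) := by omega
        rw [hmin] at hmem
        exact hcond (i+1) (by simpa using hi) (by simpa using hmem)
    have hfin : (a :: l.dropLast).take (A - w'.length) = a :: l.take (A - (w'.length + 1)) := by
      have : A - w'.length = (A - w'.length - 1) + 1 := by simp at hlen; omega
      rw [this, take_succ_cons, hdl, take_take]
      congr 2
      simp at hlen; omega
    refine Relation.ReflTransGen.head hstep ?_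
    rw [hfin] at hrec
    show FRb B _ _
    simpa [List.append_assoc] using hrec


lemma rstep_to_FR {A : ℕ} {B : Finset ℕ} {l m : List ℕ} (hA : 1 ≤ A)
    (hv : ValidL A B l) (h : RstepB B l m) : FRb B l m := by
  obtain ⟨hlen, hnd, hB⟩ := hv
  obtain ⟨x, hxB, hxl, rfl⟩ := h
  have hlt : l.tail.length = A - 1 := by simp [length_tail, hlen]
  have hw := pushWord (A := A) (B := B) (x :: (l.drop 1).reverse) l hlen hnd ?_ ?_ ?_ ?_
  · have hwl : (x :: (l.drop 1).reverse).length = A := by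
      simp [length_reverse, length_drop, hlen]; omega
    rw [hwl] at hw
    simp only [Nat.sub_self, take_zero, append_nil, reverse_cons, reverse_reverse] at hw
    simpa [drop_one] using hw
  · exact nodup_cons.2 ⟨fun hc => hxl (mem_of_mem_drop (mem_reverse.1 hc)),
      (nodup_reverse).2 (hnd.sublist (drop_sublist _ _))⟩
  · intro y hy
    rcases mem_cons.1 hy with rfl | hy
    · exact hxB
    · exact hB y (mem_of_mem_drop (mem_reverse.1 hy))
  · simp [length_reverse, length_drop, hlen]; omega
  · intro i hi
    rcases i with _ | j
    · simpa [Nat.sub_zero, ← hlen, take_length] using hxl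
    · have hj : j < A - 1 := by
        simp [length_reverse, length_drop, hlen] at hi; omega
      have h1 : (x :: (l.drop 1).reverse)[j+1] = (l.drop 1).reverse[j]'(by
          simp [length_reverse, length_drop, hlen]; omega) := by simp
      have h2 : (l.drop 1).reverse[j]'(by simp [length_reverse, length_drop, hlen]; omega)
          = l[A - 1 - j]'(by omega) := by
        rw [getElem_reverse]
        simp only [getElem_drop]
        congr 1
        simp [length_reverse, length_drop, hlen]; omega
      rw [h1, h2]
      have := getElem_not_mem_take hnd (j := A - 1 - j) (by omega)
      have hidx : A - (j+1) = A - 1 - j := by omega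
      rw [hidx]
      exact this

lemma pstep_to_RR {A : ℕ} {B : Finset ℕ} {l m : List ℕ} (hA : 1 ≤ A)
    (hv : ValidL A B l) (h : PstepB B l m) : RRb B l m := by
  obtain ⟨hlen, hnd, hB⟩ := hv
  obtain ⟨x, hxB, hxl, rfl⟩ := h
  have hlne : l ≠ [] := by intro hc; rw [hc] at hlen; simp at hlen; omega
  have hw := appendWord (B := B) (x :: l.dropLast) l hlne ?_ ?_ ?_
  · have hwl : (x :: l.dropLast).length = l.length := by simp [length_dropLast]; omega
    rwa [hwl, drop_left] at hw
  · exact nodup_cons.2 ⟨fun hc => hxl (dropLast_subset _ hc), hnd.sublist (dropLast_sublist _)⟩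
  · intro y hy
    rcases mem_cons.1 hy with rfl | hy
    · exact hxB
    · exact hB y (dropLast_subset _ hy)
  · intro i hi
    rcases i with _ | j
    · simpa using hxl
    · have hj : j < l.length - 1 := by simpa [length_dropLast] using hi
      have h1 : (x :: l.dropLast)[j+1] = l[j]'(by omega) := by
        simp [getElem_dropLast]
      rw [h1]
      exact getElem_not_mem_drop hnd (by omega)

lemma rstep_symm {A : ℕ} {B : Finset ℕ} {l m : List ℕ} (hA : 1 ≤ A)
    (hv : ValidL A B l) (h : RstepB B l m) : RRb B m l := by
  obtain ⟨hlen, hnd, hB⟩ := hv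
  obtain ⟨x, hxB, hxl, rfl⟩ := h
  have hw := appendWord (B := B) l (l.tail ++ [x]) (by simp) hnd hB ?_
  · have hml : (l.tail ++ [x]).length = l.length := by simp [length_tail]; omega
    rwa [drop_left' hml] at hw
  · intro i hi hmem
    rw [drop_append] at hmem
    rcases mem_append.1 hmem with hmem | hmem
    · rw [← drop_one, drop_drop] at hmem
      rw [Nat.add_comm] at hmem
      exact getElem_not_mem_drop hnd hi hmem
    · have : l[i] = x := by
        have := mem_of_mem_drop hmem; simpa using this
      exact hxl (this ▸ getElem_mem hi)

lemma rr_valid {A : ℕ} {B : Finset ℕ} {l m : List ℕ} (hA : 1 ≤ A)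
    (hv : ValidL A B l) (h : RRb B l m) : ValidL A B m := by
  induction h with
  | refl => exact hv
  | tail _ hstep ih => exact ih.rstep hA hstep

lemma fr_valid {A : ℕ} {B : Finset ℕ} {l m : List ℕ} (hA : 1 ≤ A)
    (hv : ValidL A B l) (h : FRb B l m) : ValidL A B m := by
  induction h with
  | refl => exact hv
  | tail _ hstep ih => exact ih.pstep hA hstep

lemma rr_symm {A : ℕ} {B : Finset ℕ} {l m : List ℕ} (hA : 1 ≤ A)
    (hv : ValidL A B l) (h : RRb B l m) : RRb B m l := by
  induction h with
  | refl => exact Relation.ReflTransGen.refl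
  | tail hab hstep ih =>
    exact Relation.ReflTransGen.trans (rstep_symm hA (rr_valid hA hv hab) hstep) ih

lemma rr_to_FR {A : ℕ} {B : Finset ℕ} {l m : List ℕ} (hA : 1 ≤ A)
    (hv : ValidL A B l) (h : RRb B l m) : FRb B l m := by
  induction h with
  | refl => exact Relation.ReflTransGen.refl
  | tail hab hstep ih =>
    exact Relation.ReflTransGen.trans ih (rstep_to_FR hA (rr_valid hA hv hab) hstep)


lemma exists_junk {A : ℕ} {B : Finset ℕ} {l : List ℕ} (hv : ValidL A B l)
    (hcard : A + 1 ≤ B.card) : ∃ j ∈ B, j ∉ l := by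
  have h1 : l.toFinset.card = A := by
    rw [List.toFinset_card_of_nodup hv.2.1, hv.1]
  have h2 : 0 < (B \ l.toFinset).card := by
    have := Finset.le_card_sdiff l.toFinset B
    omega
  obtain ⟨j, hj⟩ := Finset.card_pos.1 h2
  rw [Finset.mem_sdiff] at hj
  exact ⟨j, hj.1, fun hc => hj.2 (List.mem_toFinset.2 hc)⟩

lemma tailset_notmem {A : ℕ} {B : Finset ℕ} {l : List ℕ} {x : ℕ} (hA : 1 ≤ A)
    (hv : ValidL A B l) (hxB : x ∈ B) (hx : x ∉ l) :
    RRb B l (l.tail ++ [x]) ∧ ValidL A B (l.tail ++ [x]) :=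
  ⟨Relation.ReflTransGen.single ⟨x, hxB, hx, rfl⟩, hv.rstep hA ⟨x, hxB, hx, rfl⟩⟩

lemma tailset {A : ℕ} {B : Finset ℕ} {x : ℕ} (hA : 1 ≤ A) (hcard : A + 2 ≤ B.card)
    (hxB : x ∈ B) : ∀ n (l : List ℕ), l.idxOf x ≤ n → ValidL A B l →
    ∃ u, RRb B l (u ++ [x]) ∧ ValidL A B (u ++ [x]) := by
  intro n
  induction n with
  | zero =>
    intro l hle hv
    by_cases hx : x ∈ l
    · -- idxOf = 0 : x is the head
      obtain ⟨a, t, rfl⟩ := exists_cons_of_ne_nil (l := l)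
        (by intro hc; rw [hc] at hv; have := hv.1; simp at this; omega)
      have hax : a = x := by
        by_contra hne
        rw [List.idxOf_cons_ne _ hne] at hle
        omega
      subst hax
      obtain ⟨j, hjB, hjl⟩ := exists_junk hv (by omega)
      have hstep : RstepB B (a :: t) ((a :: t).tail ++ [j]) := ⟨j, hjB, hjl, rfl⟩
      have hv' := hv.rstep hA hstep
      have hxt : a ∉ t ++ [j] := by
        have hat : a ∉ t := (nodup_cons.1 hv.2.1).1
        have haj : a ≠ j := by rintro rfl; exact hjl (mem_cons_self)
        simp [hat, haj]
      have h2 := tailset_notmem hA hv' hxB (by simpa using hxt)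
      exact ⟨(t ++ [j]).tail, Relation.ReflTransGen.head hstep (by show RRb B _ _; simpa using h2.1),
        by simpa using h2.2⟩
    · exact ⟨l.tail, (tailset_notmem hA hv hxB hx).1, (tailset_notmem hA hv hxB hx).2⟩
  | succ n ih =>
    intro l hle hv
    by_cases hx : x ∈ l
    · by_cases hle' : l.idxOf x ≤ n
      · exact ih l hle' hv
      · have hidx : l.idxOf x = n + 1 := by omega
        obtain ⟨a, t, rfl⟩ := exists_cons_of_ne_nil (l := l)
          (by intro hc; rw [hc] at hv; have := hv.1; simp at this; omega)
        have hax : a ≠ x := by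
          rintro rfl; rw [List.idxOf_cons_self] at hidx; omega
        have hxt : x ∈ t := by
          rcases mem_cons.1 hx with h | h
          · exact absurd h.symm hax
          · exact h
        obtain ⟨j, hjB, hjl⟩ := exists_junk hv (by omega)
        have hstep : RstepB B (a :: t) ((a :: t).tail ++ [j]) := ⟨j, hjB, hjl, rfl⟩
        have hv' := hv.rstep hA hstep
        have hidx' : (t ++ [j]).idxOf x ≤ n := by
          rw [List.idxOf_append_of_mem hxt]
          rw [List.idxOf_cons_ne _ hax] at hidx
          omega
        obtain ⟨u, hu1, hu2⟩ := ih (t ++ [j]) hidx' (by simpa using hv')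
        exact ⟨u, Relation.ReflTransGen.head hstep (by show RRb B _ _; simpa using hu1), hu2⟩
    · exact ⟨l.tail, (tailset_notmem hA hv hxB hx).1, (tailset_notmem hA hv hxB hx).2⟩

lemma sim {A : ℕ} {B : Finset ℕ} {l' : List ℕ} {x z : ℕ} (hA : 1 ≤ A)
    (hcard : A + 3 ≤ B.card) (hv : ValidL (A + 1) B (l' ++ [x])) (hzB : z ∈ B)
    (hz : z ∉ l') (hzx : z ≠ x) :
    RRb B (l' ++ [x]) ((z :: l'.dropLast) ++ [x]) := by
  have hlen' : l'.length = A := by have := hv.1; simp at this; omega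
  have hl'ne : l' ≠ [] := by intro hc; rw [hc] at hlen'; simp at hlen'; omega
  -- junk element
  have hjk : ∃ j ∈ B, j ∉ l' ∧ j ≠ x ∧ j ≠ z := by
    have h1 : (insert z (l' ++ [x]).toFinset).card ≤ A + 2 := by
      have h2 : (l' ++ [x]).toFinset.card ≤ A + 1 := by
        rw [List.toFinset_card_of_nodup hv.2.1]
        simp [hlen']
      calc (insert z (l' ++ [x]).toFinset).card ≤ (l' ++ [x]).toFinset.card + 1 :=
        Finset.card_insert_le _ _
      _ ≤ A + 2 := by omega
    have h2 : 0 < (B \ insert z (l' ++ [x]).toFinset).card := by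
      have := Finset.le_card_sdiff (insert z (l' ++ [x]).toFinset) B
      omega
    obtain ⟨j, hj⟩ := Finset.card_pos.1 h2
    rw [Finset.mem_sdiff, Finset.mem_insert] at hj
    refine ⟨j, hj.1, ?_, ?_, ?_⟩
    · intro hc; exact hj.2 (Or.inr (List.mem_toFinset.2 (by simp [hc])))
    · intro hc; exact hj.2 (Or.inr (List.mem_toFinset.2 (by simp [hc])))
    · intro hc; exact hj.2 (Or.inl hc)
  obtain ⟨j, hjB, hjl, hjx, hjz⟩ := hjk
  -- the append word
  have hw := appendWord (B := B) ([j, z] ++ l'.dropLast ++ [x]) (l' ++ [x]) (by simp) ?_ ?_ ?_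
  · have hwlen : ([j, z] ++ l'.dropLast ++ [x]).length = A + 2 := by
      simp [length_dropLast, hlen']; omega
    rw [hwlen] at hw
    have hres : ((l' ++ [x]) ++ ([j, z] ++ l'.dropLast ++ [x])).drop (A + 2)
        = (z :: l'.dropLast) ++ [x] := by
      have hlen2 : ((l' ++ [x]) ++ [j]).length = A + 2 := by simp [hlen']
      have hassoc : (l' ++ [x]) ++ ([j, z] ++ l'.dropLast ++ [x])
          = ((l' ++ [x]) ++ [j]) ++ ((z :: l'.dropLast) ++ [x]) := by
        simp
      rw [hassoc, drop_left' hlen2]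
    rwa [hres] at hw
  · -- nodup of the word
    have hndl' : l'.Nodup := hv.2.1.sublist (sublist_append_left _ _)
    have hxl' : x ∉ l' := fun hc => (nodup_append.1 hv.2.1).2.2 _ hc _ (mem_singleton.2 rfl) rfl
    have h1 : (l'.dropLast ++ [x]).Nodup := by
      rw [nodup_append]
      refine ⟨hndl'.sublist (dropLast_sublist _), nodup_singleton _, ?_⟩
      intro y hy _z hy' hyz
      rw [← hyz] at hy'
      rcases mem_singleton.1 hy' with rfl
      exact hxl' (dropLast_subset _ hy)
    have h2 : ([j,z] ++ (l'.dropLast ++ [x])).Nodup := by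
      rw [nodup_append]
      refine ⟨by simp [hjz], h1, ?_⟩
      intro y hy _z hy' hyz
      rw [← hyz] at hy'
      rcases (by simpa using hy : y = j ∨ y = z) with rfl | rfl
      · rcases mem_append.1 hy' with h | h
        · exact hjl (dropLast_subset _ h)
        · exact hjx (mem_singleton.1 h)
      · rcases mem_append.1 hy' with h | h
        · exact hz (dropLast_subset _ h)
        · exact hzx (mem_singleton.1 h)
    simpa using h2
  · intro y hy
    rcases mem_append.1 hy with h | h
    · rcases mem_append.1 h with h | h
      · rcases mem_cons.1 h with rfl | h
        · exact hjB
        · rcases mem_singleton.1 (by simpa using h) with rfl; exact hzB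
      · exact hv.2.2 y (mem_append_left _ (dropLast_subset _ h))
    · rcases mem_singleton.1 h with rfl
      exact hv.2.2 y (by simp)
  · -- index conditions
    intro i hi hmem
    have hwlen : ([j, z] ++ l'.dropLast ++ [x]).length = A + 2 := by
      simp [length_dropLast, hlen']; omega
    rw [hwlen] at hi
    rcases i with _ | i
    · -- j
      simp only [List.cons_append, List.getElem_cons_zero, drop_zero] at hmem
      rcases mem_append.1 hmem with h | h
      · exact hjl h
      · exact hjx (mem_singleton.1 h)
    rcases i with _ | i
    · -- z
      simp only [List.cons_append, List.getElem_cons_succ, List.getElem_cons_zero] at hmem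
      have := mem_of_mem_drop hmem
      rcases mem_append.1 this with h | h
      · exact hz h
      · exact hzx (mem_singleton.1 h)
    · -- elements of l'.dropLast, then x
      have hi' : i < A := by omega
      have hget0 : ([j, z] ++ l'.dropLast ++ [x])[i+2]'(by rw [hwlen]; omega)
          = (l'.dropLast ++ [x])[i]'(by simp [length_dropLast, hlen']; omega) := by
        simp [List.cons_append]
      rw [hget0] at hmem
      by_cases hix : i < A - 1
      · -- element l'[i]
        have hget : (l'.dropLast ++ [x])[i]'(by simp [length_dropLast, hlen']; omega)
            = l'[i]'(by omega) := by
          rw [List.getElem_append_left (by simp [length_dropLast, hlen']; omega)]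
          exact getElem_dropLast _
        rw [hget] at hmem
        rw [drop_append] at hmem
        rcases mem_append.1 hmem with h | h
        · -- in l'.drop (i+2)
          have h2 : l'[i]'(by omega) ∈ l'.drop (i+1) := by
            have : l'.drop (i+2) = (l'.drop (i+1)).drop 1 := by
              rw [drop_drop]
            rw [this] at h
            exact mem_of_mem_drop h
          exact getElem_not_mem_drop (hv.2.1.sublist (List.sublist_append_left _ _)) (by omega) h2
        · have hxl' : x ∉ l' := fun hc => (nodup_append.1 hv.2.1).2.2 _ hc _ (mem_singleton.2 rfl) rfl
          have : l'[i]'(by omega) = x := by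
            have := mem_of_mem_drop h; simpa using this
          exact hxl' (this ▸ getElem_mem (by omega))
      · -- x : i = A - 1, position i+2 = A+1, drop (A+1) of (l'++[x]) is []
        have hiA : i = A - 1 := by omega
        have : (l' ++ [x]).drop (i + 2) = [] := by
          apply drop_eq_nil_of_le
          simp [hlen']; omega
        rw [this] at hmem
        simp at hmem

lemma lift {a : ℕ} {B : Finset ℕ} {x : ℕ} (ha : 1 ≤ a) (hx : x ∈ B)
    (hcard : a + 3 ≤ B.card) : ∀ {u v : List ℕ}, RRb (B.erase x) u v →
    ValidL a (B.erase x) u → RRb B (u ++ [x]) (v ++ [x]) := by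
  intro u v h hvu
  induction h with
  | refl => exact Relation.ReflTransGen.refl
  | @tail b c hab hstep ih =>
    -- hstep : RstepB (B.erase x) b c
    have hvb : ValidL a (B.erase x) b := rr_valid ha hvu hab
    obtain ⟨y, hyB', hyb, rfl⟩ := hstep
    have hbne : b ≠ [] := by intro hc; rw [hc] at hvb; have := hvb.1; simp at this; omega
    have hxb : x ∉ b := fun hc => (Finset.notMem_erase x B) (hvb.2.2 x hc)
    have hxbt : x ∉ b.tail ++ [y] := by
      intro hc
      rcases mem_append.1 hc with h | h
      · exact hxb (tail_subset _ h)
      · rcases mem_singleton.1 h with rfl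
        exact (Finset.notMem_erase x B) hyB'
    have hvb' : ValidL a (B.erase x) (b.tail ++ [y]) := hvb.rstep ha ⟨y, hyB', hyb, rfl⟩
    -- validity of the extended lists at level a+1 over B
    have hvbx : ValidL (a+1) B (b ++ [x]) := by
      refine ⟨by simp [hvb.1], ?_, ?_⟩
      · rw [nodup_append]
        exact ⟨hvb.2.1, nodup_singleton _, fun p hp _q hp' hpq => by
          rw [← hpq] at hp'; rcases mem_singleton.1 hp' with rfl; exact hxb hp⟩
      · intro p hp
        rcases mem_append.1 hp with h | h
        · exact Finset.mem_of_mem_erase (hvb.2.2 p h)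
        · rcases mem_singleton.1 h with rfl; exact hx
    have hvbx' : ValidL (a+1) B ((b.tail ++ [y]) ++ [x]) := by
      refine ⟨by simp [length_tail, hvb.1]; omega, ?_, ?_⟩
      · rw [nodup_append]
        exact ⟨hvb'.2.1, nodup_singleton _, fun p hp _q hp' hpq => by
          rw [← hpq] at hp'; rcases mem_singleton.1 hp' with rfl; exact hxbt hp⟩
      · intro p hp
        rcases mem_append.1 hp with h | h
        · exact Finset.mem_of_mem_erase (hvb'.2.2 p h)
        · rcases mem_singleton.1 h with rfl; exact hx
    -- simulate : from (b.tail ++ [y]) ++ [x] we can reach b ++ [x]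
    obtain ⟨hd, tl, rfl⟩ := exists_cons_of_ne_nil hbne
    have hsim : RRb B (((hd :: tl).tail ++ [y]) ++ [x])
        ((hd :: ((hd :: tl).tail ++ [y]).dropLast) ++ [x]) := by
      refine sim ha hcard hvbx' ?_ ?_ ?_
      · exact Finset.mem_of_mem_erase (hvb.2.2 hd (mem_cons_self))
      · intro hc
        simp only [tail_cons] at hc
        rcases mem_append.1 hc with h | h
        · exact (nodup_cons.1 hvb.2.1).1 h
        · rcases mem_singleton.1 h with rfl
          exact hyb (mem_cons_self)
      · intro hc
        subst hc
        exact hxb (mem_cons_self)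
    have hdl : ((hd :: tl).tail ++ [y]).dropLast = tl := by simp
    rw [hdl] at hsim
    have hback : RRb B ((hd :: tl) ++ [x]) (((hd :: tl).tail ++ [y]) ++ [x]) :=
      rr_symm (by omega) hvbx' hsim
    exact Relation.ReflTransGen.trans ih hback

theorem conn : ∀ (a : ℕ) (B : Finset ℕ) (l t : List ℕ), a + 2 ≤ B.card →
    ValidL a B l → ValidL a B t → RRb B l t := by
  intro a
  induction a with
  | zero =>
    intro B l t _ hvl hvt
    have hl : l = [] := List.length_eq_zero_iff.1 hvl.1
    have ht : t = [] := List.length_eq_zero_iff.1 hvt.1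
    rw [hl, ht]
    exact Relation.ReflTransGen.refl
  | succ a ih =>
    intro B l t hcard hvl hvt
    have htne : t ≠ [] := by intro hc; rw [hc] at hvt; have := hvt.1; simp at this
    set x := t.getLast htne with hxdef
    have hxB : x ∈ B := hvt.2.2 x (List.getLast_mem htne)
    obtain ⟨u, hu1, hu2⟩ := tailset (by omega) (by omega) hxB (l.idxOf x) l le_rfl hvl
    have htd : t.dropLast ++ [x] = t := List.dropLast_append_getLast htne
    rcases Nat.eq_zero_or_pos a with ha0 | ha
    · -- a = 0 : u and t.dropLast are both empty
      subst ha0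
      have hu0 : u = [] := by
        have := hu2.1; rcases u with _ | ⟨p, q⟩
        · rfl
        · simp at this
      have ht0 : t.dropLast = [] := by
        have := hvt.1
        have : t.dropLast.length = 0 := by simp [length_dropLast, this]
        exact List.length_eq_zero_iff.1 this
      rw [hu0] at hu1
      rw [← htd, ht0]
      simpa using hu1
    · -- main case
      have hxu : x ∉ u := by
        intro hc
        have := hu2.2.1
        rw [nodup_append] at this
        exact this.2.2 _ hc _ (mem_singleton.2 rfl) rfl
      have hxt : x ∉ t.dropLast := by
        intro hc
        have := hvt.2.1
        rw [← htd, nodup_append] at this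
        exact this.2.2 _ hc _ (mem_singleton.2 rfl) rfl
      have hvu' : ValidL a (B.erase x) u := by
        refine ⟨?_, ?_, ?_⟩
        · have := hu2.1; simp at this; omega
        · exact hu2.2.1.sublist (sublist_append_left _ _)
        · intro p hp
          exact Finset.mem_erase.2 ⟨fun hc => hxu (hc ▸ hp), hu2.2.2 p (mem_append_left _ hp)⟩
      have hvt' : ValidL a (B.erase x) t.dropLast := by
        refine ⟨?_, ?_, ?_⟩
        · have := hvt.1; simp [length_dropLast, this]
        · exact hvt.2.1.sublist (dropLast_sublist _)
        · intro p hp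
          exact Finset.mem_erase.2 ⟨fun hc => hxt (hc ▸ hp),
            hvt.2.2 p (dropLast_subset _ hp)⟩
      have hcard' : a + 2 ≤ (B.erase x).card := by
        rw [Finset.card_erase_of_mem hxB]; omega
      have hchain := ih (B.erase x) u t.dropLast hcard' hvu' hvt'
      have hlift := lift ha hxB (by omega) hchain hvu'
      rw [htd] at hlift
      exact Relation.ReflTransGen.trans hu1 hlift


lemma stIdx_lt_iff {A : ℕ} {m : List ℕ} (hm : m.length = A) {b : ℕ} :
    stIdx m b < A ↔ b ∈ m := by
  rw [stIdx, ← hm]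
  exact List.idxOf_lt_length_iff

lemma stIdx_hit {A : ℕ} {m : List ℕ} (hm : m.length = A) {b : ℕ} (hb : b ∈ m) :
    updFIFO A b (stIdx m) = stIdx m := by
  rw [updFIFO, if_pos ((stIdx_lt_iff hm).2 hb)]

lemma stIdx_miss {A : ℕ} {m : List ℕ} (hm : m.length = A) (hnd : m.Nodup)
    (hA : 1 ≤ A) {b : ℕ} (hb : b ∉ m) :
    updFIFO A b (stIdx m) = stIdx (b :: m.dropLast) := by
  have hmne : m ≠ [] := by intro hc; rw [hc] at hm; simp at hm; omega
  obtain ⟨L, e, hmd⟩ : ∃ L e, m = L ++ [e] :=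
    ⟨m.dropLast, m.getLast hmne, (List.dropLast_append_getLast hmne).symm⟩
  subst hmd
  have hL : L.length = A - 1 := by simp at hm; omega
  have heL : e ∉ L := fun hc => (nodup_append.1 hnd).2.2 _ hc _ (mem_singleton.2 rfl) rfl
  have hbL : b ∉ L := fun hc => hb (mem_append_left _ hc)
  have hbe : b ≠ e := fun hc => hb (mem_append_right _ (mem_singleton.2 hc))
  rw [updFIFO, if_neg (by rw [stIdx, List.idxOf_of_notMem hb, hm]; omega)]
  funext b'
  simp only [dropLast_concat]
  by_cases hbb : b' = b
  · subst hbb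
    simp [stIdx, List.idxOf_cons_self]
  · rw [if_neg hbb]
    have hr : stIdx (b :: L) b' = L.idxOf b' + 1 := by
      rw [stIdx, List.idxOf_cons_ne _ (fun h => hbb h.symm)]
    by_cases h1 : b' ∈ L
    · have hv1 : stIdx (L ++ [e]) b' = L.idxOf b' := by
        rw [stIdx, List.idxOf_append_of_mem h1]
      have hlt : L.idxOf b' < A - 1 := by rw [← hL]; exact List.idxOf_lt_length_iff.2 h1
      rw [hv1, if_pos (by omega), hr]
    · by_cases h2 : b' = e
      · subst h2
        have hv1 : stIdx (L ++ [b']) b' = A - 1 := by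
          rw [stIdx, List.idxOf_append_of_notMem h1, List.idxOf_cons_self, hL]
          omega
        rw [hv1, if_pos (by omega), hr, List.idxOf_of_notMem h1, hL]
      · have hv1 : stIdx (L ++ [e]) b' = A := by
          rw [stIdx, List.idxOf_append_of_notMem h1, hL,
            List.idxOf_cons_ne _ (fun h => h2 h.symm)]
          simp; omega
        rw [hv1, if_neg (by omega), hr, List.idxOf_of_notMem h1, hL]
        omega

lemma updTrace_append (upd : ℕ → (ℕ → ℕ) → (ℕ → ℕ)) :
    ∀ (t₁ t₂ : List ℕ) (c : ℕ → ℕ),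
    updTrace upd (t₁ ++ t₂) c = updTrace upd t₂ (updTrace upd t₁ c)
  | [], t₂, c => rfl
  | b :: t₁, t₂, c => by
    simp only [List.cons_append, updTrace]
    exact updTrace_append upd t₁ t₂ (upd b c)

lemma trace_realize {A : ℕ} {B : Finset ℕ} (hA : 1 ≤ A) :
    ∀ (t : List ℕ) (m : List ℕ), ValidL A B m → (∀ b ∈ t, b ∈ B) →
    ∃ m', FRb B m m' ∧ updTrace (updFIFO A) t (stIdx m) = stIdx m'
  | [], m, hv, _ => ⟨m, Relation.ReflTransGen.refl, rfl⟩
  | b :: t, m, hv, hB => by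
    by_cases hb : b ∈ m
    · obtain ⟨m', h1, h2⟩ := trace_realize hA t m hv (fun p hp => hB p (mem_cons_of_mem _ hp))
      exact ⟨m', h1, by rw [updTrace, stIdx_hit hv.1 hb]; exact h2⟩
    · have hstep : PstepB B m (b :: m.dropLast) :=
        ⟨b, hB b (mem_cons_self), hb, rfl⟩
      obtain ⟨m', h1, h2⟩ := trace_realize hA t (b :: m.dropLast) (hv.pstep hA hstep)
        (fun p hp => hB p (mem_cons_of_mem _ hp))
      exact ⟨m', Relation.ReflTransGen.head hstep h1,
        by rw [updTrace, stIdx_miss hv.1 hv.2.1 hA hb]; exact h2⟩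

lemma fr_realize {A : ℕ} {B : Finset ℕ} {l₀ m : List ℕ} (hA : 1 ≤ A)
    (hv₀ : ValidL A B l₀) (h : FRb B l₀ m) :
    ∃ t : List ℕ, (∀ b ∈ t, b ∈ B) ∧ updTrace (updFIFO A) t (stIdx l₀) = stIdx m := by
  induction h with
  | refl => exact ⟨[], by simp, rfl⟩
  | @tail b c hab hstep ih =>
    obtain ⟨t, ht1, ht2⟩ := ih
    obtain ⟨x, hxB, hxb, rfl⟩ := hstep
    have hvb : ValidL A B b := fr_valid hA hv₀ hab
    refine ⟨t ++ [x], ?_, ?_⟩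
    · intro p hp
      rcases mem_append.1 hp with h | h
      · exact ht1 p h
      · rcases mem_singleton.1 h with rfl; exact hxB
    · rw [updTrace_append, ht2]
      show updTrace (updFIFO A) [x] (stIdx b) = _
      rw [updTrace, updTrace, stIdx_miss hvb.1 hvb.2.1 hA hxb]

lemma reach_eq {A : ℕ} {B : Finset ℕ} {l₀ : List ℕ} (hA : 1 ≤ A) (hv₀ : ValidL A B l₀) :
    Reach (updFIFO A) ↑B (stIdx l₀) = stIdx '' {m | FRb B l₀ m} := by
  ext c'
  constructor
  · rintro ⟨t, htB, rfl⟩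
    obtain ⟨m', h1, h2⟩ := trace_realize hA t l₀ hv₀ (fun b hb => htB b hb)
    exact ⟨m', h1, h2.symm⟩
  · rintro ⟨m, hm, rfl⟩
    obtain ⟨t, ht1, ht2⟩ := fr_realize hA hv₀ hm
    exact ⟨t, fun b hb => ht1 b hb, ht2⟩

lemma stIdx_injOn {A : ℕ} : ∀ {l m : List ℕ}, l.Nodup → m.Nodup → l.length = A →
    m.length = A → stIdx l = stIdx m → l = m := by
  intro l m hl hm hll hml heq
  apply List.ext_getElem (by omega)
  intro i hi1 hi2
  have h1 : l.idxOf (l[i]) = i := List.Nodup.idxOf_getElem hl i hi1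
  have h2 : m.idxOf (l[i]) = i := by
    have := congrFun heq (l[i])
    rw [stIdx, stIdx, h1] at this
    exact this.symm
  have h3 : m.idxOf (l[i]) < m.length := by omega
  have h4 := List.getElem_idxOf h3
  have h4' : m[i]? = some (l[i]'hi1) := by
    conv_lhs => rw [← h2]
    rw [List.getElem?_eq_getElem h3]
    exact congrArg some h4
  rw [List.getElem?_eq_getElem hi2] at h4'
  exact (Option.some.inj h4').symm


/-! ### Counting: the generic case `fp ≥ A+2` -/

lemma frset_eq_valid {A : ℕ} {B : Finset ℕ} {l₀ : List ℕ} (hA : 1 ≤ A)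
    (hcard : A + 2 ≤ B.card) (hv₀ : ValidL A B l₀) :
    {m | FRb B l₀ m} = {m | ValidL A B m} := by
  ext m
  constructor
  · exact fun h => fr_valid hA hv₀ h
  · intro hm
    exact rr_to_FR hA hv₀ (conn A B l₀ m hcard hv₀ hm)

noncomputable def validEquiv (A : ℕ) (B : Finset ℕ) :
    {m : List ℕ // ValidL A B m} ≃ (Fin A ↪ {y // y ∈ B}) where
  toFun m := ⟨fun i => ⟨m.1[(i : ℕ)]'(by rw [m.2.1]; exact i.isLt),
      m.2.2.2 _ (List.getElem_mem _)⟩, by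
    intro i j hij
    apply Fin.ext
    exact m.2.2.1.getElem_inj_iff.1 (congrArg Subtype.val hij)⟩
  invFun f := ⟨List.ofFn (fun i => (f i : ℕ)), by
    refine ⟨by simp, ?_, ?_⟩
    · rw [List.nodup_ofFn]
      intro i j hij
      exact f.injective (Subtype.ext hij)
    · intro y hy
      rw [List.mem_ofFn] at hy
      obtain ⟨i, rfl⟩ := hy
      exact (f i).2⟩
  left_inv m := by
    apply Subtype.ext
    apply List.ext_getElem (by simp [m.2.1])
    intro i h1 h2
    simp
    rfl
  right_inv f := by
    apply DFunLike.ext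
    intro i
    apply Subtype.ext
    simp

lemma card_valid (A : ℕ) (B : Finset ℕ) :
    Set.ncard {m : List ℕ | ValidL A B m} = (B.card).descFactorial A := by
  have h1 : Nat.card {m : List ℕ // ValidL A B m} = (B.card).descFactorial A := by
    rw [Nat.card_congr (validEquiv A B), Nat.card_eq_fintype_card,
      Fintype.card_embedding_eq, Fintype.card_coe, Fintype.card_fin]
  rw [← Nat.card_coe_set_eq]
  exact h1

/-! ### Counting: the case `fp = A+1` (rotations) -/

lemma rot_valid {A : ℕ} {B : Finset ℕ} {w : List ℕ} (hw : w.Nodup)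
    (hlw : w.length = A + 1) (hwB : ∀ y ∈ w, y ∈ B) (r : ℕ) :
    ValidL A B ((w.rotate r).take A) := by
  refine ⟨?_, ?_, ?_⟩
  · simp [length_take, hlw]
  · exact ((List.nodup_rotate).2 hw).sublist (List.take_sublist _ _)
  · intro y hy
    exact hwB y (List.mem_rotate.1 (List.take_subset _ _ hy))

lemma rot_push_eq {A : ℕ} {w : List ℕ} (hA : 1 ≤ A) (hlw : w.length = A + 1) (r : ℕ) :
    (w.rotate (r + A)).take A
      = (w.rotate r)[A]'(by simp [hlw]) :: ((w.rotate r).take A).dropLast := by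
  obtain ⟨k, rfl⟩ : ∃ k, A = k + 1 := ⟨A - 1, by omega⟩
  set v := w.rotate r with hv
  have hlv : v.length = k + 2 := by simp [hv, hlw]
  have hAlt : k + 1 < v.length := by omega
  have h1 : w.rotate (r + (k+1)) = v.rotate (k+1) := (List.rotate_rotate w r (k+1)).symm
  have h2 : v.rotate (k+1) = v.drop (k+1) ++ v.take (k+1) :=
    List.rotate_eq_drop_append_take (by omega)
  have h3 : v.drop (k+1) = [v[k+1]] := by
    rw [List.drop_eq_getElem_cons hAlt]
    congr 1
    exact List.drop_eq_nil_of_le (by omega)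
  have h4 : ((v.take (k+1)).dropLast) = v.take k := by
    rw [dropLast_eq_take, length_take, take_take]
    congr 1
    omega
  rw [h1, h2, h3, h4]
  rw [List.singleton_append, take_succ_cons, take_take]
  congr 2
  omega

lemma rot_push {A : ℕ} {B : Finset ℕ} {w : List ℕ} (hA : 1 ≤ A) (hw : w.Nodup)
    (hlw : w.length = A + 1) (hwB : ∀ y ∈ w, y ∈ B) (r : ℕ) :
    PstepB B ((w.rotate r).take A) ((w.rotate (r + A)).take A) := by
  set v := w.rotate r with hv
  have hlv : v.length = A + 1 := by simp [hv, hlw]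
  have hnv : v.Nodup := (List.nodup_rotate).2 hw
  have hAlt : A < v.length := by omega
  have hgm : v[A] ∈ w := List.mem_rotate.1 (List.getElem_mem hAlt)
  exact ⟨v[A], hwB _ hgm, getElem_not_mem_take hnv hAlt, rot_push_eq hA hlw r⟩

lemma rot_start {A : ℕ} {B : Finset ℕ} {w : List ℕ} (hA : 1 ≤ A) (hw : w.Nodup)
    (hlw : w.length = A + 1) (hwB : ∀ y ∈ w, y ∈ B) :
    ∀ j, FRb B ((w.rotate 1).take A) ((w.rotate (1 + j * A)).take A) := by
  intro j
  induction j with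
  | zero => simp; exact Relation.ReflTransGen.refl
  | succ j ih =>
    have hstep := rot_push hA hw hlw hwB (1 + j * A)
    have hidx : 1 + j * A + A = 1 + (j + 1) * A := by ring
    rw [hidx] at hstep
    exact Relation.ReflTransGen.tail ih hstep

lemma rot_all {A : ℕ} {B : Finset ℕ} {w : List ℕ} (hA : 1 ≤ A) (hw : w.Nodup)
    (hlw : w.length = A + 1) (hwB : ∀ y ∈ w, y ∈ B) {r : ℕ} (hr : r < A + 1) :
    FRb B ((w.rotate 1).take A) ((w.rotate r).take A) := by
  set q := A + 1 - r with hq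
  have hrq : r + q = A + 1 := by omega
  have hidx : 1 + (q + 1) * A = r + (A + 1) * q := by
    have h2 : (q+1)*A = q*A + A := by ring
    have h3 : (A+1)*q = q*A + q := by ring
    rw [h2, h3]
    generalize q * A = P
    omega
  have := rot_start hA hw hlw hwB (q + 1)
  have hroteq : w.rotate (1 + (q + 1) * A) = w.rotate r := by
    rw [hidx, ← List.rotate_rotate]
    have : (A + 1) * q = (w.rotate r).length * q := by
      rw [List.length_rotate, hlw]
    rw [this, List.rotate_length_mul]
  rwa [hroteq] at this

lemma frset_eq_rot {A : ℕ} {B : Finset ℕ} {w : List ℕ} (hA : 1 ≤ A) (hw : w.Nodup)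
    (hlw : w.length = A + 1) (hwB : ∀ y ∈ w, y ∈ B) (hBw : ∀ y ∈ B, y ∈ w) :
    {m | FRb B ((w.rotate 1).take A) m}
      = ↑((Finset.range (A+1)).image (fun r => (w.rotate r).take A)) := by
  ext m
  simp only [Set.mem_setOf_eq, Finset.coe_image, Set.mem_image, Finset.mem_coe,
    Finset.mem_range]
  constructor
  · intro h
    induction h with
    | refl => exact ⟨1, by omega, rfl⟩
    | @tail b c hab hstep ih =>
      obtain ⟨r, hr, rfl⟩ := ih
      obtain ⟨x, hxB, hxm, rfl⟩ := hstep
      set v := w.rotate r with hv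
      have hlv : v.length = A + 1 := by simp [hv, hlw]
      have hnv : v.Nodup := (List.nodup_rotate).2 hw
      have hxv : x ∈ v := (List.mem_rotate).2 (hBw x hxB)
      have hxd : x ∈ v.drop A := by
        have := (List.take_append_drop A v) ▸ hxv
        rcases mem_append.1 this with h | h
        · exact absurd h hxm
        · exact h
      have hAlt : A < v.length := by omega
      have hdx : v.drop A = [v[A]] := by
        rw [List.drop_eq_getElem_cons hAlt]
        congr 1
        exact List.drop_eq_nil_of_le (by omega)
      have hxeq : x = v[A] := by
        rw [hdx] at hxd
        exact mem_singleton.1 hxd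
      refine ⟨(r + A) % (A + 1), Nat.mod_lt _ (by omega), ?_⟩
      have hrm : w.rotate ((r + A) % (A + 1)) = w.rotate (r + A) := by
        rw [← hlw]
        exact List.rotate_mod w (r + A)
      rw [hrm, rot_push_eq hA hlw r, hxeq]
  · rintro ⟨r, hr, rfl⟩
    exact rot_all hA hw hlw hwB hr


lemma rot_card {A : ℕ} {w : List ℕ} (hA : 1 ≤ A) (hw : w.Nodup) (hlw : w.length = A + 1) :
    ((Finset.range (A+1)).image (fun r => (w.rotate r).take A)).card = A + 1 := by
  rw [Finset.card_image_of_injOn, Finset.card_range]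
  intro r1 h1 r2 h2 heq
  rw [Finset.mem_coe, Finset.mem_range] at h1 h2
  simp only at heq
  have e0 : (w.rotate r1)[0]? = (w.rotate r2)[0]? := by
    have t1 : ((w.rotate r1).take A)[0]? = (w.rotate r1)[0]? :=
      List.getElem?_take_of_lt (by omega)
    have t2 : ((w.rotate r2).take A)[0]? = (w.rotate r2)[0]? :=
      List.getElem?_take_of_lt (by omega)
    rw [← t1, ← t2, heq]
  have hlt1 : (0 : ℕ) < (w.rotate r1).length := by simp [hlw]
  have hlt2 : (0 : ℕ) < (w.rotate r2).length := by simp [hlw]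
  rw [List.getElem?_eq_getElem hlt1, List.getElem?_eq_getElem hlt2] at e0
  have e1 : (w.rotate r1)[0]'hlt1 = (w.rotate r2)[0]'hlt2 := Option.some.inj e0
  rw [List.getElem_rotate, List.getElem_rotate] at e1
  have e2 := hw.getElem_inj_iff.1 e1
  rw [Nat.zero_add, Nat.zero_add, hlw, Nat.mod_eq_of_lt h1, Nat.mod_eq_of_lt h2] at e2
  exact e2


lemma trace_const {A : ℕ} {S : Set ℕ} {c : ℕ → ℕ} (h : ∀ b ∈ S, updFIFO A b c = c) :
    ∀ t : List ℕ, (∀ b ∈ t, b ∈ S) → updTrace (updFIFO A) t c = c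
  | [], _ => rfl
  | b :: t, hb => by
    rw [updTrace, h b (hb b (mem_cons_self))]
    exact trace_const h t (fun p hp => hb p (mem_cons_of_mem _ hp))

lemma reach_const {A : ℕ} {S : Set ℕ} {c : ℕ → ℕ} (h : ∀ b ∈ S, updFIFO A b c = c) :
    Reach (updFIFO A) S c = {c} := by
  apply Set.eq_singleton_iff_unique_mem.2
  refine ⟨⟨[], by simp, rfl⟩, ?_⟩
  rintro c' ⟨t, htB, rfl⟩
  exact trace_const h t htB

lemma filled_repr {A : ℕ} {B : Finset ℕ} {c : ℕ → ℕ} (hA : 1 ≤ A)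
    (hle : ∀ b, c b ≤ A) (hinj : ∀ b b', c b < A → c b = c b' → b = b')
    (hcov : ∀ a, a < A → ∃ b, c b = a)
    (himg : c '' ↑B = Set.Iio (min (A + 1) B.card)) (hcard : A + 1 ≤ B.card) :
    ∃ l₀, ValidL A B l₀ ∧ c = stIdx l₀ := by
  have hmin : min (A + 1) B.card = A + 1 := by omega
  rw [hmin] at himg
  set g : Fin A → ℕ := fun i => Classical.choose (hcov i i.isLt) with hg
  have hgspec : ∀ i : Fin A, c (g i) = i := fun i => Classical.choose_spec (hcov i i.isLt)
  have hginj : Function.Injective g := by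
    intro i j hij
    apply Fin.ext
    rw [← hgspec i, ← hgspec j, hij]
  have hgB : ∀ i : Fin A, g i ∈ B := by
    intro i
    have hi : (i : ℕ) ∈ Set.Iio (A + 1) := by simp
    rw [← himg] at hi
    obtain ⟨b, hbB, hbc⟩ := hi
    have : g i = b := hinj (g i) b (by rw [hgspec]; exact i.isLt) (by rw [hgspec, hbc])
    rw [this]; exact hbB
  set l₀ := List.ofFn g with hl₀
  have hlen : l₀.length = A := by simp [hl₀]
  have hnd : l₀.Nodup := by rw [hl₀, List.nodup_ofFn]; exact hginj
  have hvB : ∀ y ∈ l₀, y ∈ B := by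
    intro y hy
    rw [hl₀, List.mem_ofFn] at hy
    obtain ⟨i, rfl⟩ := hy
    exact hgB i
  refine ⟨l₀, ⟨hlen, hnd, hvB⟩, ?_⟩
  funext b
  rcases Nat.lt_or_ge (c b) A with hb | hb
  · have hbg : b = g ⟨c b, hb⟩ := hinj b (g ⟨c b, hb⟩) hb (by rw [hgspec])
    have h5 : l₀[c b]'(by omega) = b := by
      have h6 : (List.ofFn g)[c b]'(by simpa [List.length_ofFn] using hb)
          = g ⟨c b, hb⟩ := by
        rw [List.getElem_ofFn]
      exact h6.trans hbg.symm
    show c b = l₀.idxOf b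
    conv_rhs => rw [← h5]
    rw [List.Nodup.idxOf_getElem hnd]
  · have hbA : c b = A := le_antisymm (hle b) hb
    have hbn : b ∉ l₀ := by
      intro hc'
      rw [hl₀, List.mem_ofFn] at hc'
      obtain ⟨i, hi⟩ := hc'
      have := hgspec i
      rw [hi, hbA] at this
      omega
    show c b = l₀.idxOf b
    rw [List.idxOf_of_notMem hbn, hlen, hbA]

theorem abs_filled_fifo' (A fp : ℕ) (B : Finset ℕ) (c : ℕ → ℕ)
    (hfp : B.card = fp) (hfill : FilledWith A c B) :
    (fp ≤ A → (Reach (updFIFO A) ↑B c).ncard = 1) ∧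
    (fp = A + 1 → (Reach (updFIFO A) ↑B c).ncard = A + 1) ∧
    (A + 1 < fp → (Reach (updFIFO A) ↑B c).ncard = Nat.factorial fp / Nat.factorial (fp - A)) := by
  obtain ⟨⟨hle, hinj⟩, hcov, himg⟩ := hfill
  subst hfp
  rcases Nat.eq_zero_or_pos A with hA0 | hA
  · -- A = 0 : the state never changes
    subst hA0
    have h0 : ∀ b, c b = 0 := fun b => Nat.le_zero.1 (hle b)
    have hconst : ∀ b ∈ (↑B : Set ℕ), updFIFO 0 b c = c := by
      intro b _
      rw [updFIFO, if_neg (by omega)]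
      funext b'
      by_cases hbb : b' = b
      · subst hbb; rw [if_pos rfl, h0]
      · rw [if_neg hbb, if_neg (by omega)]
    rw [reach_const hconst, Set.ncard_singleton]
    refine ⟨fun _ => rfl, fun _ => rfl, fun h => ?_⟩
    rw [Nat.sub_zero, Nat.div_self (Nat.factorial_pos _)]
  refine ⟨?_, ?_, ?_⟩
  · -- fp ≤ A
    intro hfpA
    have hconst : ∀ b ∈ (↑B : Set ℕ), updFIFO A b c = c := by
      intro b hb
      have : c b ∈ c '' ↑B := ⟨b, hb, rfl⟩
      rw [himg] at this
      have : c b < min (A + 1) B.card := this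
      rw [updFIFO, if_pos (by omega)]
    rw [reach_const hconst, Set.ncard_singleton]
  · -- fp = A + 1
    intro hfpA
    obtain ⟨l₀, hv₀, hc⟩ := filled_repr hA hle hinj hcov himg (by omega)
    -- find the excluded block
    have hsub : l₀.toFinset ⊆ B := fun y hy => hv₀.2.2 y (List.mem_toFinset.1 hy)
    have htc : l₀.toFinset.card = A := by
      rw [List.toFinset_card_of_nodup hv₀.2.1, hv₀.1]
    have hsd : (B \ l₀.toFinset).card = 1 := by
      rw [Finset.card_sdiff_of_subset hsub, htc, hfpA]
      omega
    obtain ⟨x₀, hx₀⟩ := Finset.card_eq_one.1 hsd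
    have hx₀B : x₀ ∈ B := by
      have : x₀ ∈ B \ l₀.toFinset := by rw [hx₀]; exact Finset.mem_singleton_self _
      exact (Finset.mem_sdiff.1 this).1
    have hx₀l : x₀ ∉ l₀ := by
      have : x₀ ∈ B \ l₀.toFinset := by rw [hx₀]; exact Finset.mem_singleton_self _
      exact fun hc' => (Finset.mem_sdiff.1 this).2 (List.mem_toFinset.2 hc')
    set w := x₀ :: l₀ with hw
    have hwnd : w.Nodup := nodup_cons.2 ⟨hx₀l, hv₀.2.1⟩
    have hwlen : w.length = A + 1 := by simp [hw, hv₀.1]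
    have hwB : ∀ y ∈ w, y ∈ B := by
      intro y hy
      rcases mem_cons.1 hy with rfl | hy
      · exact hx₀B
      · exact hv₀.2.2 y hy
    have hBw : ∀ y ∈ B, y ∈ w := by
      intro y hy
      by_cases hyl : y ∈ l₀
      · exact mem_cons_of_mem _ hyl
      · have : y ∈ B \ l₀.toFinset :=
          Finset.mem_sdiff.2 ⟨hy, fun hc' => hyl (List.mem_toFinset.1 hc')⟩
        rw [hx₀] at this
        rw [Finset.mem_singleton.1 this]
        exact mem_cons_self
    have hl₀eq : l₀ = (w.rotate 1).take A := by
      rw [hw]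
      rw [show (1 : ℕ) = 0 + 1 from rfl, List.rotate_cons_succ, List.rotate_zero]
      rw [take_left' hv₀.1]
    rw [hc, reach_eq hA hv₀]
    have hfr : {m | FRb B l₀ m}
        = ↑((Finset.range (A+1)).image (fun r => (w.rotate r).take A)) := by
      rw [hl₀eq]
      exact frset_eq_rot hA hwnd hwlen hwB hBw
    rw [hfr]
    have hinjOn : Set.InjOn stIdx
        ↑((Finset.range (A+1)).image (fun r => (w.rotate r).take A)) := by
      intro m1 h1 m2 h2 heq
      rw [Finset.mem_coe, Finset.mem_image] at h1 h2
      obtain ⟨r1, _, rfl⟩ := h1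
      obtain ⟨r2, _, rfl⟩ := h2
      have hv1 := rot_valid hwnd hwlen hwB r1
      have hv2 := rot_valid hwnd hwlen hwB r2
      exact stIdx_injOn hv1.2.1 hv2.2.1 hv1.1 hv2.1 heq
    rw [Set.ncard_image_of_injOn hinjOn, Set.ncard_coe_finset, rot_card hA hwnd hwlen]
  · -- A + 1 < fp
    intro hfpA
    obtain ⟨l₀, hv₀, hc⟩ := filled_repr hA hle hinj hcov himg (by omega)
    rw [hc, reach_eq hA hv₀, frset_eq_valid hA (by omega) hv₀]
    have hinjOn : Set.InjOn stIdx {m : List ℕ | ValidL A B m} := by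
      intro m1 h1 m2 h2 heq
      exact stIdx_injOn h1.2.1 h2.2.1 h1.1 h2.1 heq
    rw [Set.ncard_image_of_injOn hinjOn, card_valid]
    rw [Nat.descFactorial_eq_div (by omega)]

end FifoAux


/-- For a FIFO cache of associativity `A` starting from a state filled with a set
`B` of `fp` blocks, the number of reachable cache states under traces over `B` is
`1` if `fp ≤ A`, is `A+1` if `fp = A+1`, and is `fp!/(fp−A)!` if `fp > A+1`. -/
theorem abs_filled_fifo (A fp : ℕ) (B : Finset ℕ) (c : ℕ → ℕ)
    (hfp : B.card = fp) (hfill : FilledWith A c B) :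
    (fp ≤ A → (Reach (updFIFO A) ↑B c).ncard = 1) ∧
    (fp = A + 1 → (Reach (updFIFO A) ↑B c).ncard = A + 1) ∧
    (A + 1 < fp → (Reach (updFIFO A) ↑B c).ncard = Nat.factorial fp / Nat.factorial (fp - A)) :=
  FifoAux.abs_filled_fifo' A fp B c hfp hfill
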